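/- The function h(γ) = ln(γ+1) − (γ+1)(γ²+2γ)²/(3γ²+6γ+1) satisfies h(γ) → 0 as γ → 0⁺ and h(γ) → −∞ as γ → ∞, and h has exactly one sign change on (0,∞): there exists γ̂ > 0 such that h > 0 on (0, γ̂) and h < 0 on (γ̂, ∞). -/

import Mathlib

open Real Filter

noncomputable def hfun8 (γ : ℝ) : ℝ :=
  Real.log (γ + 1) - (γ + 1) * (γ ^ 2 + 2 * γ) ^ 2 / (3 * γ ^ 2 + 6 * γ + 1)

noncomputable def Rfun8 (s : ℝ) : ℝ :=
  s⁻¹ + (4 - 14*s - 128*s^2 - 226*s^3 - 173*s^4 - 63*s^5 - 9*s^6)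

lemma hfun8_zero : hfun8 0 = 0 := by
  simp [hfun8]

lemma hfun8_hasDeriv (γ : ℝ) (hγ : 0 ≤ γ) :
    HasDerivAt hfun8
      ((1 + 4*γ - 14*γ^2 - 128*γ^3 - 226*γ^4 - 173*γ^5 - 63*γ^6 - 9*γ^7)
        / ((γ + 1) * (3*γ^2 + 6*γ + 1)^2)) γ := by
  have hγ1 : (0:ℝ) < γ + 1 := by linarith
  have hDpos : (0:ℝ) < 3*γ^2 + 6*γ + 1 := by nlinarith [sq_nonneg γ]
  have h3 : HasDerivAt (fun x : ℝ => x + 1) 1 γ := (hasDerivAt_id γ).add_const 1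
  have h1 : HasDerivAt (fun x : ℝ => x^2 + 2*x) (2*γ + 2) γ := by
    have := (hasDerivAt_pow 2 γ).add ((hasDerivAt_id γ).const_mul 2)
    exact this.congr_deriv (by norm_num)
  have h2 : HasDerivAt (fun x : ℝ => (x^2 + 2*x)^2)
      ((2:ℕ) * (γ^2 + 2*γ) ^ 1 * (2*γ + 2)) γ := h1.pow 2
  have hN : HasDerivAt (fun x : ℝ => (x + 1) * (x^2 + 2*x)^2)
      (1 * (γ^2 + 2*γ)^2 + (γ + 1) * ((2:ℕ) * (γ^2 + 2*γ) ^ 1 * (2*γ + 2))) γ := h3.mul h2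
  have hD : HasDerivAt (fun x : ℝ => 3*x^2 + 6*x + 1) (6*γ + 6) γ := by
    have := (((hasDerivAt_pow 2 γ).const_mul 3).add ((hasDerivAt_id γ).const_mul 6)).add_const 1
    exact this.congr_deriv (by push_cast; ring)
  have hdiv := hN.div hD (ne_of_gt hDpos)
  have hlog : HasDerivAt (fun x : ℝ => Real.log (x + 1)) ((γ+1)⁻¹ * 1) γ :=
    by have := (Real.hasDerivAt_log (ne_of_gt hγ1)).comp γ h3; exact this
  have hh := hlog.sub hdiv
  refine hh.congr_deriv ?_
  have h1ne : γ + 1 ≠ 0 := ne_of_gt hγ1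
  have hDne : 3*γ^2 + 6*γ + 1 ≠ 0 := ne_of_gt hDpos
  field_simp
  ring

lemma hfun8_contOn : ContinuousOn hfun8 (Set.Ici 0) :=
  fun x hx => ((hfun8_hasDeriv x hx).continuousAt).continuousWithinAt

lemma Rfun8_anti : StrictAntiOn Rfun8 (Set.Ioi 0) := by
  intro a ha b hb hab
  simp only [Set.mem_Ioi] at ha hb
  have h1 : b⁻¹ < a⁻¹ := by
    rw [inv_lt_inv₀ hb ha]; exact hab
  have p2 : a^2 < b^2 := by nlinarith
  have p3 : a^3 < b^3 := by nlinarith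
  have p4 : a^4 < b^4 := by nlinarith
  have p5 : a^5 < b^5 := pow_lt_pow_left₀ hab ha.le (by norm_num)
  have p6 : a^6 < b^6 := pow_lt_pow_left₀ hab ha.le (by norm_num)
  unfold Rfun8
  linarith

theorem stmt_8 :
    Filter.Tendsto
      (fun γ : ℝ =>
        Real.log (γ + 1) - (γ + 1) * (γ ^ 2 + 2 * γ) ^ 2 / (3 * γ ^ 2 + 6 * γ + 1))
      (nhdsWithin 0 (Set.Ioi 0)) (nhds 0) ∧
    Filter.Tendsto
      (fun γ : ℝ =>
        Real.log (γ + 1) - (γ + 1) * (γ ^ 2 + 2 * γ) ^ 2 / (3 * γ ^ 2 + 6 * γ + 1))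
      atTop atBot ∧
    ∃ γhat : ℝ, 0 < γhat ∧
      (∀ γ : ℝ, 0 < γ → γ < γhat →
        0 < Real.log (γ + 1) - (γ + 1) * (γ ^ 2 + 2 * γ) ^ 2 / (3 * γ ^ 2 + 6 * γ + 1)) ∧
      (∀ γ : ℝ, γhat < γ →
        Real.log (γ + 1) - (γ + 1) * (γ ^ 2 + 2 * γ) ^ 2 / (3 * γ ^ 2 + 6 * γ + 1) < 0) := by
  have hfeq : (fun γ : ℝ =>
      Real.log (γ + 1) - (γ + 1) * (γ ^ 2 + 2 * γ) ^ 2 / (3 * γ ^ 2 + 6 * γ + 1)) = hfun8 := rfl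
  rw [hfeq]
  -- limit at 0 from the right
  have lim0 : Filter.Tendsto hfun8 (nhdsWithin 0 (Set.Ioi 0)) (nhds 0) := by
    have := (hfun8_hasDeriv 0 le_rfl).continuousAt.continuousWithinAt (s := Set.Ioi 0)
    rw [ContinuousWithinAt, hfun8_zero] at this
    exact this
  refine ⟨lim0, ?_, ?_⟩
  · -- limit at infinity
    apply tendsto_atBot_mono' atTop ?_ tendsto_neg_atTop_atBot
    filter_upwards [eventually_ge_atTop (5:ℝ)] with γ hγ
    have hDpos : (0:ℝ) < 3*γ^2 + 6*γ + 1 := by nlinarith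
    have hfrac : 2*γ ≤ (γ + 1) * (γ ^ 2 + 2 * γ) ^ 2 / (3 * γ ^ 2 + 6 * γ + 1) := by
      rw [le_div_iff₀ hDpos]; nlinarith
    have hlog : Real.log (γ + 1) ≤ γ := by
      have := Real.log_le_sub_one_of_pos (show (0:ℝ) < γ + 1 by linarith)
      linarith
    show hfun8 γ ≤ -γ
    unfold hfun8
    linarith
  · -- sign change
    -- find t₀ the root of R
    have hRc : ContinuousOn Rfun8 (Set.Icc (1/10 : ℝ) 1) := by
      apply ContinuousOn.add
      · exact continuousOn_id.inv₀ fun x hx => by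
          have := hx.1; intro h; rw [id] at h; rw [h] at this; norm_num at this
      · exact (by continuity : Continuous fun s : ℝ =>
          4 - 14*s - 128*s^2 - 226*s^3 - 173*s^4 - 63*s^5 - 9*s^6).continuousOn
    have hmem : (0:ℝ) ∈ Set.Icc (Rfun8 1) (Rfun8 (1/10)) := by
      constructor <;> (unfold Rfun8; norm_num)
    obtain ⟨t₀, ht₀mem, ht₀⟩ := intermediate_value_Icc' (by norm_num : (1/10:ℝ) ≤ 1) hRc hmem
    have ht₀pos : 0 < t₀ := lt_of_lt_of_le (by norm_num) ht₀mem.1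
    -- sign of Q on either side of t₀
    have Qeq : ∀ s : ℝ, s ≠ 0 →
        1 + 4*s - 14*s^2 - 128*s^3 - 226*s^4 - 173*s^5 - 63*s^6 - 9*s^7 = s * Rfun8 s := by
      intro s hs; unfold Rfun8; field_simp; ring
    have Qpos : ∀ s : ℝ, 0 < s → s < t₀ →
        0 < 1 + 4*s - 14*s^2 - 128*s^3 - 226*s^4 - 173*s^5 - 63*s^6 - 9*s^7 := by
      intro s hs hst
      rw [Qeq s (ne_of_gt hs)]
      have : Rfun8 t₀ < Rfun8 s := Rfun8_anti (Set.mem_Ioi.2 hs) (Set.mem_Ioi.2 ht₀pos) hst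
      rw [ht₀] at this
      exact mul_pos hs this
    have Qneg : ∀ s : ℝ, t₀ < s →
        1 + 4*s - 14*s^2 - 128*s^3 - 226*s^4 - 173*s^5 - 63*s^6 - 9*s^7 < 0 := by
      intro s hst
      have hs : 0 < s := lt_trans ht₀pos hst
      rw [Qeq s (ne_of_gt hs)]
      have : Rfun8 s < Rfun8 t₀ := Rfun8_anti (Set.mem_Ioi.2 ht₀pos) (Set.mem_Ioi.2 hs) hst
      rw [ht₀] at this
      exact mul_neg_of_pos_of_neg hs this
    -- h strictly monotone on [0, t₀], strictly antitone on [t₀, ∞)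
    have hmono : StrictMonoOn hfun8 (Set.Icc 0 t₀) := by
      apply strictMonoOn_of_deriv_pos (convex_Icc 0 t₀)
        (hfun8_contOn.mono (fun x hx => hx.1))
      intro x hx
      rw [interior_Icc] at hx
      rw [(hfun8_hasDeriv x hx.1.le).deriv]
      apply div_pos (Qpos x hx.1 hx.2)
      have hDpos : (0:ℝ) < 3*x^2 + 6*x + 1 := by nlinarith [hx.1.le]
      have : (0:ℝ) < x + 1 := by linarith [hx.1]
      positivity
    have hanti : StrictAntiOn hfun8 (Set.Ici t₀) := by
      apply strictAntiOn_of_deriv_neg (convex_Ici t₀)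
        (hfun8_contOn.mono (fun x hx => le_trans ht₀pos.le hx))
      intro x hx
      rw [interior_Ici] at hx
      have hxpos : 0 < x := lt_trans ht₀pos hx
      rw [(hfun8_hasDeriv x hxpos.le).deriv]
      apply div_neg_of_neg_of_pos (Qneg x hx)
      have hDpos : (0:ℝ) < 3*x^2 + 6*x + 1 := by nlinarith [hxpos.le]
      have : (0:ℝ) < x + 1 := by linarith
      positivity
    have ht₀val : 0 < hfun8 t₀ := by
      have := hmono (Set.mem_Icc.2 ⟨le_rfl, ht₀pos.le⟩)
        (Set.mem_Icc.2 ⟨ht₀pos.le, le_rfl⟩) ht₀pos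
      rwa [hfun8_zero] at this
    have h5neg : hfun8 5 < 0 := by
      have hlog : Real.log (5 + 1) ≤ 5 := by
        have := Real.log_le_sub_one_of_pos (show (0:ℝ) < 5 + 1 by norm_num)
        linarith
      unfold hfun8
      norm_num
      norm_num at hlog
      linarith
    have ht₀5 : t₀ ≤ 5 := le_trans ht₀mem.2 (by norm_num)
    -- IVT on [t₀, 5]
    have hc2 : ContinuousOn hfun8 (Set.Icc t₀ 5) :=
      hfun8_contOn.mono (fun x hx => le_trans ht₀pos.le hx.1)
    have hmem2 : (0:ℝ) ∈ Set.Icc (hfun8 5) (hfun8 t₀) := ⟨h5neg.le, ht₀val.le⟩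
    obtain ⟨γhat, hγmem, hγeq⟩ := intermediate_value_Icc' ht₀5 hc2 hmem2
    have hγhat_gt : t₀ < γhat := by
      rcases lt_or_eq_of_le hγmem.1 with h | h
      · exact h
      · exfalso; rw [← h] at hγeq; rw [hγeq] at ht₀val; exact lt_irrefl 0 ht₀val
    refine ⟨γhat, lt_trans ht₀pos hγhat_gt, ?_, ?_⟩
    · intro γ hγpos hγlt
      show 0 < hfun8 γ
      rcases le_or_gt γ t₀ with h | h
      · have := hmono (Set.mem_Icc.2 ⟨le_rfl, ht₀pos.le⟩)
          (Set.mem_Icc.2 ⟨hγpos.le, h⟩) hγpos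
        rwa [hfun8_zero] at this
      · have := hanti (Set.mem_Ici.2 h.le) (Set.mem_Ici.2 hγmem.1) hγlt
        rwa [hγeq] at this
    · intro γ hγgt
      show hfun8 γ < 0
      have := hanti (Set.mem_Ici.2 hγmem.1)
        (Set.mem_Ici.2 (le_trans hγmem.1 hγgt.le)) hγgt
      rwa [hγeq] at this
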